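/- For each integer n ≥ 0, all nonempty finite sets of formulae X₁, …, Xₙ, every coalition C, and every sacrifice function s: ⊢ ⋀_{i≤n} ⟪C:Xᵢ⟫_s → ⟪C:X₁⊗X₂⊗⋯⊗Xₙ⟫_s, where X₁⊗⋯⊗Xₙ denotes (⋯((X₁⊗X₂)⊗X₃)⋯)⊗Xₙ for n > 2, is X₁ for n = 1, and is the singleton set {⊤} for n = 0. -/

import Mathlib

/-- Formulas of the language Φ, over a set `A` of agents, with propositional
variables indexed by `ℕ`.  `dil C X s` is the ethical-dilemma modality `[C:X]_s`,
where the finite set `X` of formulae is represented by a list. -/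
inductive Fm (A : Type) : Type
  | var : ℕ → Fm A
  | neg : Fm A → Fm A
  | imp : Fm A → Fm A → Fm A
  | dil : Set A → List (Fm A) → (A → ℝ) → Fm A

namespace Fm

variable {A : Type}

/-- Truth ⊤. -/
def top : Fm A := imp (var 0) (var 0)

/-- Falsehood ⊥. -/
def bot : Fm A := neg top

/-- Conjunction, defined as usual. -/
def conj (φ ψ : Fm A) : Fm A := neg (imp φ (neg ψ))

/-- Disjunction, defined as usual. -/
def disj (φ ψ : Fm A) : Fm A := imp (neg φ) ψ

/-- Disjunction of all formulae in a list (`∨∅ = ⊥`). -/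
def bigOr : List (Fm A) → Fm A
  | [] => bot
  | φ :: rest => disj φ (bigOr rest)

/-- Conjunction of all formulae in a list (`∧∅ = ⊤`). -/
def bigAnd : List (Fm A) → Fm A
  | [] => top
  | φ :: rest => conj φ (bigAnd rest)

/-- `X ⊗ Y = {φ ∧ ψ | φ ∈ X, ψ ∈ Y}`. -/
def otimes (X Y : List (Fm A)) : List (Fm A) :=
  X.flatMap fun φ => Y.map fun ψ => conj φ ψ

/-- `X₁ ⊗ X₂ ⊗ ⋯ ⊗ Xₙ`, which is `{⊤}` for `n = 0` and `X₁` for `n = 1`. -/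
def bigOtimes : List (List (Fm A)) → List (Fm A)
  | [] => [top]
  | X :: rest => rest.foldl otimes X

/-- The weak dilemma `⟪C:X⟫_s`, i.e. the disjunction `⋁_{∅ ≠ Z ⊆ X} [C:Z]_s`. -/
def wdil (C : Set A) (X : List (Fm A)) (s : A → ℝ) : Fm A :=
  bigOr (((X.sublists).filter fun Z => !Z.isEmpty).map fun Z => dil C Z s)

/-- A propositional tautology in the language Φ: a formula that evaluates to true
under every Boolean valuation that respects negation and implication (treating
variables and dilemma formulae as atoms). -/
def Tautology (φ : Fm A) : Prop :=
  ∀ v : Fm A → Bool,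
    (∀ ψ, v (neg ψ) = !v ψ) →
    (∀ ψ χ, v (imp ψ χ) = (!v ψ || v χ)) →
    v φ = true

/-- Derivability `⊢ φ` in the logical system: all propositional tautologies,
the Combination, Monotonicity, Minimality and No Alternatives axioms, and the
Modus Ponens, Necessitation and Substitution inference rules. -/
inductive Derives : Fm A → Prop
  | taut {φ : Fm A} : Tautology φ → Derives φ
  | comb {C : Set A} {X Y : List (Fm A)} {s : A → ℝ} :
      C.Nonempty → X ≠ [] → Y ≠ [] →
      Derives (imp (dil C X s) (imp (dil C Y s) (wdil C (otimes X Y) s)))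
  | mono {C D : Set A} {X : List (Fm A)} {s s' : A → ℝ} :
      C.Nonempty → C ⊆ D → X ≠ [] → (∀ a, s a ≤ s' a) →
      Derives (imp (dil C X s') (wdil D X s))
  | minim {C : Set A} {X Y : List (Fm A)} {s : A → ℝ} :
      C.Nonempty → Y ≠ [] → {ψ | ψ ∈ Y} ⊂ {ψ | ψ ∈ X} →
      Derives (imp (dil C X s) (neg (dil C Y s)))
  | noalt {C D : Set A} {X : List (Fm A)} {s : A → ℝ} :
      C.Nonempty → D.Nonempty → (∃ φ, {ψ | ψ ∈ X} = {φ}) →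
      Derives (imp (dil C X s) (dil D X s))
  | mp {φ ψ : Fm A} : Derives φ → Derives (imp φ ψ) → Derives ψ
  | nec {φ : Fm A} {C : Set A} {s : A → ℝ} :
      C.Nonempty → Derives φ → Derives (dil C [φ] s)
  | subst {C : Set A} {X : List (Fm A)} {s : A → ℝ} {τ : Fm A → Fm A} :
      C.Nonempty → X ≠ [] → (∀ φ ∈ X, Derives (imp φ (τ φ))) →
      Derives (imp (dil C X s) (wdil C (X.map τ) s))

/-- `Γ ⊢ φ`: provable from the theorems of the system and the additional set of
formulae `Γ` using the Modus Ponens inference rule only. -/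
inductive DerivesFrom (Γ : Set (Fm A)) : Fm A → Prop
  | thm {φ : Fm A} : Derives φ → DerivesFrom Γ φ
  | hyp {φ : Fm A} : φ ∈ Γ → DerivesFrom Γ φ
  | mp {φ ψ : Fm A} : DerivesFrom Γ φ → DerivesFrom Γ (imp φ ψ) → DerivesFrom Γ ψ

end Fm

/-- A game `(W, Δ, |·|, M, π)`. -/
structure Game (A : Type) where
  /-- the set of states -/
  W : Type
  /-- the nonempty set Δ of actions -/
  St : Type
  st_nonempty : Nonempty St
  /-- `cost d a w` is the cost `|d|ᵃ_w` of action `d` for agent `a` in state `w` -/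
  cost : St → A → W → ℝ
  /-- the mechanism `M ⊆ W × Δ^𝒜 × W` -/
  M : W → (A → St) → W → Prop
  /-- valuation of propositional variables -/
  pi : ℕ → Set W

namespace Game

variable {A : Type}

/-- Satisfaction `w ⊩ φ` (as `Sat G φ w`). -/
def Sat (G : Game A) : Fm A → G.W → Prop
  | .var p, w => w ∈ G.pi p
  | .neg φ, w => ¬ Sat G φ w
  | .imp φ ψ, w => ¬ Sat G φ w ∨ Sat G ψ w
  | .dil C X s, w =>
      (∀ t : ↥C → G.St, ∃ φ, ∃ _ : φ ∈ X,
          ∀ (δ : A → G.St) (u : G.W),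
            (∀ a : A, G.cost (δ a) a w ≤ s a) → (∀ a : ↥C, t a = δ a.1) →
            G.M w δ u → Sat G φ u) ∧
      (∀ Y : Set (Fm A), Y.Nonempty → Y ⊂ {ψ | ψ ∈ X} →
          ∃ t : ↥C → G.St, ∀ φ, ∀ _ : φ ∈ Y,
            ∃ (δ : A → G.St) (u : G.W),
              (∀ a : A, G.cost (δ a) a w ≤ s a) ∧ (∀ a : ↥C, t a = δ a.1) ∧
              G.M w δ u ∧ ¬ Sat G φ u)
termination_by φ _ => sizeOf φ
decreasing_by
  all_goals
    first
      | (simp <;> omega)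
      | (have h1 : sizeOf φ < sizeOf X := List.sizeOf_lt_of_mem ‹φ ∈ X›
         simp <;> omega)
      | (have hX : φ ∈ X := by
           have := (‹Y ⊂ {ψ | ψ ∈ X}›.1) ‹φ ∈ Y›
           simpa using this
         have h1 : sizeOf φ < sizeOf X := List.sizeOf_lt_of_mem hX
         simp <;> omega)

end Game

namespace Fm

variable {A : Type}

/-- A set of formulae is consistent if ⊥ is not provable from it. -/
def Consistent (Γ : Set (Fm A)) : Prop := ¬ DerivesFrom Γ bot

/-- A maximal consistent set of formulae. -/
def MCS (Γ : Set (Fm A)) : Prop :=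
  Consistent Γ ∧ ∀ φ : Fm A, φ ∉ Γ → ¬ Consistent (insert φ Γ)

end Fm

/-- The canonical game: states are maximal consistent sets, actions are pairs
`(Ψ, c)` of a set of "demanded" formulae and an offered price `c`. -/
def canonicalGame (A : Type) : Game A where
  W := {Γ : Set (Fm A) // Fm.MCS Γ}
  St := Set (Fm A) × ℝ
  st_nonempty := ⟨(∅, 0)⟩
  cost := fun d _ _ => d.2
  M := fun w δ u =>
    (∀ a : A, (δ a).1 ⊆ u.1) ∧
    ∀ (C : Set A) (X : List (Fm A)) (s : A → ℝ),
      C.Nonempty → X ≠ [] → Fm.wdil C X s ∈ w.1 → (∀ a : A, (δ a).2 ≤ s a) →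
      ∃ a ∈ C, ∃ φ ∈ (δ a).1, φ ∈ X
  pi := fun p => {w | Fm.var p ∈ w.1}


namespace Fm

variable {A : Type}

section Eval
variable {v : Fm A → Bool}

lemma v_top (hn : ∀ ψ : Fm A, v (neg ψ) = !v ψ)
    (hi : ∀ ψ χ : Fm A, v (imp ψ χ) = (!v ψ || v χ)) :
    v (top : Fm A) = true := by simp [top, hi]

lemma v_bot (hn : ∀ ψ : Fm A, v (neg ψ) = !v ψ)
    (hi : ∀ ψ χ : Fm A, v (imp ψ χ) = (!v ψ || v χ)) :
    v (bot : Fm A) = false := by simp [bot, hn, v_top hn hi]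

lemma v_conj (hn : ∀ ψ : Fm A, v (neg ψ) = !v ψ)
    (hi : ∀ ψ χ : Fm A, v (imp ψ χ) = (!v ψ || v χ)) (a b : Fm A) :
    v (conj a b) = (v a && v b) := by simp [conj, hn, hi]

lemma v_disj (hn : ∀ ψ : Fm A, v (neg ψ) = !v ψ)
    (hi : ∀ ψ χ : Fm A, v (imp ψ χ) = (!v ψ || v χ)) (a b : Fm A) :
    v (disj a b) = (v a || v b) := by simp [disj, hn, hi]

lemma v_bigOr (hn : ∀ ψ : Fm A, v (neg ψ) = !v ψ)
    (hi : ∀ ψ χ : Fm A, v (imp ψ χ) = (!v ψ || v χ)) :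
    ∀ L : List (Fm A), v (bigOr L) = L.any v
  | [] => by simp [bigOr, v_bot hn hi]
  | a :: r => by simp [bigOr, v_disj hn hi, v_bigOr hn hi r]

end Eval

/-- From `⊢ a`, `⊢ b` and tautology `a → b → c`, derive `⊢ c`. -/
lemma mp2 {a b c : Fm A} (ht : Tautology (imp a (imp b c)))
    (ha : Derives a) (hb : Derives b) : Derives c :=
  Derives.mp hb (Derives.mp ha (Derives.taut ht))

lemma imp_of_thm {a c : Fm A} (hc : Derives c) : Derives (imp a c) :=
  Derives.mp hc (Derives.taut (by
    intro v hn hi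
    simp only [hi]
    cases hvc : v c <;> cases hva : v a <;> simp [hvc, hva]))

lemma flip' {a b c : Fm A} (h : Derives (imp a (imp b c))) :
    Derives (imp b (imp a c)) :=
  Derives.mp h (Derives.taut (by
    intro v hn hi
    simp only [hi]
    cases hva : v a <;> cases hvb : v b <;> cases hvc : v c <;> simp [hva, hvb, hvc]))

lemma imp2_weaken {a b c d : Fm A} (h : Derives (imp a (imp b c)))
    (t : Tautology (imp c d)) : Derives (imp a (imp b d)) :=
  Derives.mp h (Derives.taut (by
    intro v hn hi
    have hc := t v hn hi
    simp only [hi] at hc ⊢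
    cases hva : v a <;> cases hvb : v b <;> cases hvc : v c <;> simp_all))

/-- Disjunction elimination. -/
lemma orElim {G : Fm A} : ∀ {L : List (Fm A)},
    (∀ d ∈ L, Derives (imp d G)) → Derives (imp (bigOr L) G)
  | [], _ => Derives.taut (by
      intro v hn hi
      simp only [bigOr, hi, v_bot hn hi]
      simp)
  | d :: r, h => by
      have hd : Derives (imp d G) := h d (by simp)
      have hr : Derives (imp (bigOr r) G) := orElim (fun e he => h e (by simp [he]))
      refine mp2 ?_ hd hr
      intro v hn hi
      simp only [bigOr, hi, v_disj hn hi]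
      cases hvd : v d <;> cases hvr : v (bigOr r) <;> cases hvG : v G <;>
        simp [hvd, hvr, hvG]

lemma taut_bigOr_mono {L L' : List (Fm A)} (h : ∀ x ∈ L, x ∈ L') :
    Tautology (imp (bigOr L) (bigOr L')) := by
  intro v hn hi
  rw [hi, v_bigOr hn hi, v_bigOr hn hi]
  cases hL : L.any v with
  | false => simp
  | true =>
      obtain ⟨x, hx, hvx⟩ := List.any_eq_true.1 hL
      simp [List.any_eq_true.2 ⟨x, h x hx, hvx⟩]

lemma taut_mem_or {d : Fm A} {L : List (Fm A)} (h : d ∈ L) :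
    Tautology (imp d (bigOr L)) := by
  intro v hn hi
  rw [hi, v_bigOr hn hi]
  cases hvd : v d with
  | false => simp
  | true => simp [List.any_eq_true.2 ⟨d, h, hvd⟩]

lemma mem_wdil_list {C : Set A} {s : A → ℝ} {X Z : List (Fm A)}
    (hZn : Z ≠ []) (hZ : List.Sublist Z X) :
    dil C Z s ∈ ((X.sublists.filter fun Z => !Z.isEmpty).map fun Z => dil C Z s) := by
  simp only [List.mem_map, List.mem_filter, List.mem_sublists]
  exact ⟨Z, ⟨hZ, by simpa using hZn⟩, rfl⟩

lemma of_mem_wdil_list {C : Set A} {s : A → ℝ} {X : List (Fm A)} {d : Fm A}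
    (h : d ∈ ((X.sublists.filter fun Z => !Z.isEmpty).map fun Z => dil C Z s)) :
    ∃ Z, List.Sublist Z X ∧ Z ≠ [] ∧ d = dil C Z s := by
  simp only [List.mem_map, List.mem_filter, List.mem_sublists] at h
  obtain ⟨Z, ⟨hZ, hZn⟩, rfl⟩ := h
  exact ⟨Z, hZ, by simpa using hZn, rfl⟩

lemma otimes_sublist {Z X W Y : List (Fm A)} (h1 : List.Sublist Z X) (h2 : List.Sublist W Y) :
    List.Sublist (otimes Z W) (otimes X Y) := by
  induction h1 with
  | slnil => simp [otimes]
  | @cons l₁ l₂ a h ih =>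
      have : otimes (a :: l₂) Y = (Y.map fun ψ => conj a ψ) ++ otimes l₂ Y := by
        simp [otimes]
      rw [this]
      exact ih.trans (List.sublist_append_right _ _)
  | @cons_cons l₁ l₂ a h ih =>
      have e1 : otimes (a :: l₁) W = (W.map fun ψ => conj a ψ) ++ otimes l₁ W := by
        simp [otimes]
      have e2 : otimes (a :: l₂) Y = (Y.map fun ψ => conj a ψ) ++ otimes l₂ Y := by
        simp [otimes]
      rw [e1, e2]
      exact (h2.map _).append ih

lemma otimes_ne_nil {X Y : List (Fm A)} (hX : X ≠ []) (hY : Y ≠ []) :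
    otimes X Y ≠ [] := by
  cases X with
  | nil => exact absurd rfl hX
  | cons a X' =>
      cases Y with
      | nil => exact absurd rfl hY
      | cons b Y' => simp [otimes]

/-- The core lemma: `⊢ ⟪C:X⟫ → ⟪C:Y⟫ → ⟪C:X⊗Y⟫`. -/
lemma core {C : Set A} (hC : C.Nonempty) {s : A → ℝ} {X Y : List (Fm A)}
    (hX : X ≠ []) (hY : Y ≠ []) :
    Derives (imp (wdil C X s) (imp (wdil C Y s) (wdil C (otimes X Y) s))) := by
  unfold wdil
  apply orElim
  intro d hd
  obtain ⟨Z, hZs, hZn, rfl⟩ := of_mem_wdil_list hd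
  apply flip'
  apply orElim
  intro e he
  obtain ⟨W, hWs, hWn, rfl⟩ := of_mem_wdil_list he
  apply flip'
  have h1 := Derives.comb (C := C) (X := Z) (Y := W) (s := s) hC hZn hWn
  unfold wdil at h1
  refine imp2_weaken h1 (taut_bigOr_mono ?_)
  intro x hx
  obtain ⟨V, hVs, hVn, rfl⟩ := of_mem_wdil_list hx
  exact List.mem_map.2 ⟨V, List.mem_filter.2
    ⟨List.mem_sublists.2 (hVs.trans (otimes_sublist hZs hWs)), by simpa using hVn⟩, rfl⟩

lemma key2 {C : Set A} (hC : C.Nonempty) {s : A → ℝ} :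
    ∀ rest : List (List (Fm A)), (∀ Y ∈ rest, Y ≠ []) →
    ∀ X : List (Fm A), X ≠ [] →
    Derives (imp (wdil C X s) (imp (bigAnd (rest.map fun Xi => wdil C Xi s))
      (wdil C (rest.foldl otimes X) s)))
  | [], _, X, hX => Derives.taut (by
      intro v hn hi
      simp only [List.map_nil, List.foldl_nil, bigAnd, hi, v_top hn hi]
      cases hvw : v (wdil C X s) <;> simp [hvw])
  | Y :: rest, h, X, hX => by
      have hY : Y ≠ [] := h Y (by simp)
      have hXY : otimes X Y ≠ [] := otimes_ne_nil hX hY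
      have ih := key2 (s := s) hC rest (fun Z hZ => h Z (by simp [hZ])) (otimes X Y) hXY
      have hc := core hC hX hY (C := C) (s := s)
      simp only [List.map_cons, List.foldl_cons, bigAnd]
      refine mp2 ?_ hc ih
      intro v hn hi
      simp only [hi, v_conj hn hi]
      cases h1 : v (wdil C X s) <;> cases h2 : v (wdil C Y s) <;>
        cases h3 : v (wdil C (otimes X Y) s) <;>
        cases h4 : v (bigAnd (List.map (fun Xi => wdil C Xi s) rest)) <;>
        cases h5 : v (wdil C (List.foldl otimes (otimes X Y) rest) s) <;>
        simp_all

lemma key {C : Set A} (hC : C.Nonempty) (s : A → ℝ) :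
    ∀ Xs : List (List (Fm A)), (∀ Xi ∈ Xs, Xi ≠ []) →
    Derives (imp (bigAnd (Xs.map fun Xi => wdil C Xi s)) (wdil C (bigOtimes Xs) s))
  | [], _ => by
      have htop : Derives (top : Fm A) := Derives.taut (fun v hn hi => v_top hn hi)
      have hd : Derives (dil C [top] s) := Derives.nec hC htop
      have hw : Derives (wdil C [(top : Fm A)] s) := by
        unfold wdil
        exact Derives.mp hd (Derives.taut (taut_mem_or
          (mem_wdil_list (by simp) (List.Sublist.refl _))))
      simpa [bigOtimes, bigAnd] using imp_of_thm hw
  | X :: rest, h => by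
      have hX : X ≠ [] := h X (by simp)
      have hk := key2 (s := s) hC rest (fun Z hZ => h Z (by simp [hZ])) X hX
      simp only [List.map_cons, bigAnd, bigOtimes]
      refine Derives.mp hk (Derives.taut ?_)
      intro v hn hi
      simp only [hi, v_conj hn hi]
      cases h1 : v (wdil C X s) <;>
        cases h2 : v (bigAnd (List.map (fun Xi => wdil C Xi s) rest)) <;>
        cases h3 : v (wdil C (List.foldl otimes X rest) s) <;> simp_all

end Fm

/-- For `n ≥ 0`: `⊢ ⋀_{i ≤ n} ⟪C:Xᵢ⟫_s → ⟪C:X₁⊗X₂⊗⋯⊗Xₙ⟫_s`, where the big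
`⊗` is left-associated, is `X₁` for `n = 1`, and is `{⊤}` for `n = 0`. -/
theorem wdil_otimes {A : Type} [Nonempty A] (C : Set A) (hC : C.Nonempty)
    (s : A → ℝ) (n : ℕ) (X : Fin n → List (Fm A)) (hX : ∀ i, X i ≠ []) :
    Fm.Derives (Fm.imp (Fm.bigAnd ((List.ofFn X).map fun Xi => Fm.wdil C Xi s))
      (Fm.wdil C (Fm.bigOtimes (List.ofFn X)) s)) := by
  apply Fm.key hC s (List.ofFn X)
  intro Xi hXi
  rw [List.mem_ofFn] at hXi
  obtain ⟨i, rfl⟩ := hXi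
  exact hX i
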